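/- Let w be an element of a Coxeter group W admitting a decomposition w = w'·w'' where the supports of w' and w'' are disjoint subsets of the simple reflections. Then the Bruhat interval [e,w] is isomorphic as a poset to the product [e,w'] × [e,w''], via the multiplication map (x,y) ↦ xy. -/

import Mathlib

set_option linter.unusedSectionVars false
set_option linter.unusedVariables false
set_option maxHeartbeats 1600000


open CoxeterSystem

variable {B W : Type*} [Group W] {M : CoxeterMatrix B}

/-- One step of Bruhat order: multiply on the right by a reflection, increasing length. -/
def bruhatStep (cs : CoxeterSystem M W) (x y : W) : Prop :=
  ∃ t : W, cs.IsReflection t ∧ y = x * t ∧ cs.length x < cs.length y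

/-- Bruhat order on a Coxeter group. -/
def bruhatLE (cs : CoxeterSystem M W) : W → W → Prop :=
  Relation.ReflTransGen (bruhatStep cs)

/-- Strict Bruhat order. -/
def bruhatLT (cs : CoxeterSystem M W) (x y : W) : Prop :=
  bruhatLE cs x y ∧ x ≠ y

/-- Cover relation in Bruhat order. -/
def bruhatCovBy (cs : CoxeterSystem M W) (x y : W) : Prop :=
  bruhatLE cs x y ∧ cs.length y = cs.length x + 1

/-- The Bruhat interval `[u, v]`. -/
def bruhatInterval (cs : CoxeterSystem M W) (u v : W) : Set W :=
  {x | bruhatLE cs u x ∧ bruhatLE cs x v}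

/-- The support of `w`: simple reflections appearing in a reduced word for `w`. -/
def supp (cs : CoxeterSystem M W) (w : W) : Set B :=
  {i | ∃ ω : List B, cs.IsReduced ω ∧ w = cs.wordProd ω ∧ i ∈ ω}


namespace BruhatAux

open Classical List

variable (cs : CoxeterSystem M W)

local prefix:100 "σ" => cs.simple
local prefix:100 "π" => cs.wordProd
local prefix:100 "ℓ" => cs.length

lemma le_trans' {u v w : W} (h1 : bruhatLE cs u v) (h2 : bruhatLE cs v w) :
    bruhatLE cs u w := Relation.ReflTransGen.trans h1 h2

lemma le_mul_reflection {w t : W} (ht : cs.IsReflection t) (h : ℓ w < ℓ (w * t)) :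
    bruhatLE cs w (w * t) := Relation.ReflTransGen.single ⟨t, ht, rfl, h⟩

lemma le_simple_mul {w : W} (i : B) (h : ℓ w < ℓ (σ i * w)) :
    bruhatLE cs w (σ i * w) := by
  have ht : cs.IsReflection (w⁻¹ * σ i * w) := by
    have := (cs.isReflection_simple i).conj w⁻¹
    simpa using this
  have : σ i * w = w * (w⁻¹ * σ i * w) := by group
  rw [this] at h ⊢
  exact le_mul_reflection cs ht h

lemma length_le_of_le {u v : W} (h : bruhatLE cs u v) : ℓ u ≤ ℓ v := by
  induction h with
  | refl => exact le_refl _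
  | tail _ hstep ih =>
      obtain ⟨t, _, _, hl⟩ := hstep
      exact le_trans ih (le_of_lt hl)

/-- parity count of `t` in a list, valued in `ZMod 2`. -/
noncomputable def bpar (t : W) : List W → ZMod 2
  | [] => 0
  | a :: l => (if a = t then 1 else 0) + bpar t l

lemma bpar_append (t : W) (l1 l2 : List W) :
    bpar t (l1 ++ l2) = bpar t l1 + bpar t l2 := by
  induction l1 with
  | nil => simp [bpar]
  | cons a l ih => simp [bpar, ih, add_assoc]

lemma bpar_map (t u : W) (f : W → W) (hf : ∀ x, f x = t ↔ x = u) (l : List W) :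
    bpar t (l.map f) = bpar u l := by
  induction l with
  | nil => simp [bpar]
  | cons a l ih =>
      simp only [List.map_cons, bpar, ih]
      congr 1
      simp [hf a]

lemma bpar_reverse (t : W) (l : List W) : bpar t l.reverse = bpar t l := by
  induction l with
  | nil => simp
  | cons a l ih => simp [bpar, bpar_append, ih, add_comm]

lemma bpar_eq_zero_of_not_mem {t : W} {l : List W} (h : t ∉ l) : bpar t l = 0 := by
  induction l with
  | nil => simp [bpar]
  | cons a l ih =>
      simp only [List.mem_cons, not_or] at h
      simp [bpar, Ne.symm h.1, ih h.2]

lemma mem_of_bpar_ne_zero {t : W} {l : List W} (h : bpar t l ≠ 0) : t ∈ l := by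
  by_contra hm; exact h (bpar_eq_zero_of_not_mem hm)

lemma zmod2_add_self (z : ZMod 2) : z + z = 0 := by
  have : (2 : ZMod 2) = 0 := rfl
  calc z + z = 2 * z := by ring
  _ = 0 := by rw [this]; ring

/-- The permutation-representation generator on `W × ZMod 2`. -/
noncomputable def sigE (i : B) : Function.End (W × ZMod 2) :=
  fun p => (σ i * p.1 * σ i, p.2 + if p.1 = σ i then 1 else 0)

lemma sigE_prod (ω : List B) (p : W × ZMod 2) :
    (List.map (sigE cs) ω).prod p
      = (π ω * p.1 * (π ω)⁻¹, p.2 + bpar p.1 (cs.rightInvSeq ω)) := by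
  induction ω with
  | nil =>
      show p = _
      simp [bpar, CoxeterSystem.rightInvSeq]
  | cons i ω ih =>
      have hmul : ∀ (f g : Function.End (W × ZMod 2)) (q : W × ZMod 2),
          (f * g) q = f (g q) := fun _ _ _ => rfl
      rw [List.map_cons, List.prod_cons, hmul, ih]
      show (σ i * (π ω * p.1 * (π ω)⁻¹) * σ i,
          (p.2 + bpar p.1 (cs.rightInvSeq ω))
            + if (π ω * p.1 * (π ω)⁻¹) = σ i then 1 else 0) = _
      have h1 : cs.rightInvSeq (i :: ω) = ((π ω)⁻¹ * σ i * π ω) :: cs.rightInvSeq ω := rfl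
      rw [h1, cs.wordProd_cons]
      have hiff : ((π ω * p.1 * (π ω)⁻¹) = σ i) ↔ ((π ω)⁻¹ * σ i * π ω = p.1) := by
        constructor
        · intro h; rw [← h]; group
        · intro h; rw [← h]; group
      have hfst : σ i * (π ω * p.1 * (π ω)⁻¹) * σ i
          = σ i * π ω * p.1 * (σ i * π ω)⁻¹ := by
        rw [mul_inv_rev, cs.inv_simple]; group
      have hsnd : (p.2 + bpar p.1 (cs.rightInvSeq ω))
            + (if (π ω * p.1 * (π ω)⁻¹) = σ i then (1:ZMod 2) else 0)
          = p.2 + bpar p.1 (((π ω)⁻¹ * σ i * π ω) :: cs.rightInvSeq ω) := by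
        show _ = p.2 + ((if (π ω)⁻¹ * σ i * π ω = p.1 then (1:ZMod 2) else 0)
            + bpar p.1 (cs.rightInvSeq ω))
        by_cases hc : (π ω * p.1 * (π ω)⁻¹) = σ i
        · rw [if_pos hc, if_pos (hiff.mp hc)]; ring
        · rw [if_neg hc, if_neg (fun h => hc (hiff.mpr h))]; ring
      rw [Prod.mk.injEq]
      exact ⟨hfst, hsnd⟩


lemma rightInvSeq_append (α β : List B) :
    cs.rightInvSeq (α ++ β)
      = (cs.rightInvSeq α).map (fun t => (π β)⁻¹ * t * π β) ++ cs.rightInvSeq β := by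
  induction α with
  | nil => simp
  | cons i α ih =>
      have h1 : cs.rightInvSeq ((i :: α) ++ β)
          = ((π (α ++ β))⁻¹ * σ i * π (α ++ β)) :: cs.rightInvSeq (α ++ β) := rfl
      have h2 : cs.rightInvSeq (i :: α) = ((π α)⁻¹ * σ i * π α) :: cs.rightInvSeq α := rfl
      rw [h1, h2, ih, List.map_cons, List.cons_append]
      congr 1
      rw [cs.wordProd_append]
      group

lemma lis_eq_map_conj (γ : List B) :
    cs.leftInvSeq γ = (cs.rightInvSeq γ).map (fun t => π γ * t * (π γ)⁻¹) := by
  induction γ with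
  | nil => simp
  | cons a γ ih =>
      have h2 : cs.rightInvSeq (a :: γ) = ((π γ)⁻¹ * σ a * π γ) :: cs.rightInvSeq γ := rfl
      have h3 : cs.leftInvSeq (a :: γ)
          = σ a :: (cs.leftInvSeq γ).map (MulAut.conj (σ a)) := rfl
      rw [h2, h3, ih, List.map_map, List.map_cons]
      congr 1
      · rw [cs.wordProd_cons, mul_inv_rev, cs.inv_simple]
        simp only [mul_assoc, mul_inv_cancel_left, inv_mul_cancel_left, inv_mul_cancel,
          mul_one]
        rw [← mul_assoc, cs.simple_mul_simple_self, one_mul]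
      · apply List.map_congr_left
        intro t _
        simp only [Function.comp_apply, MulAut.conj_apply, cs.wordProd_cons, mul_inv_rev,
          cs.inv_simple]
        group

lemma altWord_drop (i j : B) : ∀ (n d : ℕ), d ≤ n →
    (alternatingWord i j n).drop d = alternatingWord i j (n - d) := by
  intro n
  induction n with
  | zero => intro d hd; simp_all
  | succ n ihn =>
      intro d hd
      cases d with
      | zero => simp
      | succ e =>
          rw [alternatingWord_succ' i j n, List.drop_succ_cons]
          have : n + 1 - (e + 1) = n - e := by omega
          rw [this]
          exact ihn e (by omega)

lemma altWord_get? (i j : B) : ∀ (n k : ℕ), k < n →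
    (alternatingWord i j n)[k]? = some (if Even (n - k - 1) then j else i) := by
  intro n
  induction n with
  | zero => intro k hk; omega
  | succ n ihn =>
      intro k hk
      cases k with
      | zero =>
          rw [alternatingWord_succ' i j n]
          simp
      | succ e =>
          rw [alternatingWord_succ' i j n]
          have : n + 1 - (e + 1) - 1 = n - e - 1 := by omega
          rw [this]
          show (alternatingWord i j n)[e]? = _
          exact ihn e (by omega)

lemma altWord_succ_prod (a b : B) (y : ℕ) :
    π (alternatingWord a b (y+1)) = σ (if Even y then b else a) * π (alternatingWord a b y) := by
  rw [alternatingWord_succ', cs.wordProd_cons]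

lemma altWord_succ_prod' (a b : B) (y : ℕ) :
    π (alternatingWord a b (y+1)) = π (alternatingWord b a y) * σ b := by
  rw [alternatingWord_succ, cs.wordProd_concat]

lemma altWord_ris_entry (i j : B) (n k : ℕ) (h : k < n) :
    (cs.rightInvSeq (alternatingWord i j n)).getD k 1
      = (π (alternatingWord i j (n - k - 1)))⁻¹ * π (alternatingWord i j (n - k)) := by
  rw [cs.getD_rightInvSeq, altWord_drop i j n (k+1) (by omega), altWord_get? i j n k h]
  have hnk : n - k = (n - k - 1) + 1 := by omega
  rw [hnk, altWord_succ_prod]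
  have h2 : n - (k+1) = n - k - 1 := by omega
  rw [h2]
  simp [mul_assoc]

lemma braid_eq (i j : B) :
    π (alternatingWord i j (M i j)) = π (alternatingWord j i (M i j)) := by
  have h : π (alternatingWord i j (M i j)) = π (alternatingWord j i (M j i)) :=
    cs.wordProd_braidWord_eq i j
  rwa [M.symmetric j i] at h

lemma conj_key (i j : B) (x : ℕ) :
    σ (if Even (x + M i j) then j else i) * π (alternatingWord i j (M i j))
      = π (alternatingWord i j (M i j)) * σ (if Even x then j else i) := by
  by_cases hx : Even x <;> by_cases hmE : Even (M i j)
  · have hxm : Even (x + M i j) := hx.add hmE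
    rw [if_pos hx, if_pos hxm]
    have h1 : σ j * π (alternatingWord i j (M i j)) = π (alternatingWord i j (M i j + 1)) := by
      rw [altWord_succ_prod cs i j (M i j), if_pos hmE]
    rw [h1, altWord_succ_prod' cs i j (M i j), ← braid_eq]
  · have hxm : ¬ Even (x + M i j) := by
      intro h; exact hmE ((Nat.even_add.mp h).mp hx)
    rw [if_pos hx, if_neg hxm]
    have h1 : σ i * π (alternatingWord i j (M i j)) = π (alternatingWord i j (M i j + 1)) := by
      rw [altWord_succ_prod cs i j (M i j), if_neg hmE]
    rw [h1, altWord_succ_prod' cs i j (M i j), ← braid_eq]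
  · have hxm : ¬ Even (x + M i j) := by
      rw [Nat.even_add]
      intro h; exact hx (h.mpr hmE)
    rw [if_neg hx, if_neg hxm, braid_eq cs i j]
    have h1 : σ i * π (alternatingWord j i (M i j)) = π (alternatingWord j i (M i j + 1)) := by
      rw [altWord_succ_prod cs j i (M i j), if_pos hmE]
    rw [h1, altWord_succ_prod' cs j i (M i j), braid_eq cs i j]
  · have hxm : Even (x + M i j) := by
      rw [Nat.even_add]
      constructor
      · intro h; exact absurd h hx
      · intro h; exact absurd h hmE
    rw [if_neg hx, if_pos hxm, braid_eq cs i j]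
    have h1 : σ j * π (alternatingWord j i (M i j)) = π (alternatingWord j i (M i j + 1)) := by
      rw [altWord_succ_prod cs j i (M i j), if_neg hmE]
    rw [h1, altWord_succ_prod' cs j i (M i j), braid_eq cs i j]

lemma Q_lemma (i j : B) (x : ℕ) :
    π (alternatingWord i j (x + M i j))
      = π (alternatingWord i j (M i j)) * π (alternatingWord i j x) := by
  induction x with
  | zero => simp [alternatingWord]
  | succ x ih =>
      have hidx : x + 1 + M i j = (x + M i j) + 1 := by omega
      rw [hidx, altWord_succ_prod cs i j (x + M i j), ih, ← mul_assoc, conj_key cs i j x,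
        mul_assoc, ← altWord_succ_prod cs i j x]

lemma CL (i j : B) (p : ℕ) :
    (π (alternatingWord i j (p + M i j)))⁻¹ * π (alternatingWord i j (p + M i j + 1))
      = (π (alternatingWord i j p))⁻¹ * π (alternatingWord i j (p+1)) := by
  have h1 := Q_lemma cs i j p
  have h2 := Q_lemma cs i j (p+1)
  have hidx : p + M i j + 1 = (p+1) + M i j := by omega
  rw [hidx, h2, h1, mul_inv_rev]
  group

lemma ris_alt_doubled (i j : B) :
    cs.rightInvSeq (alternatingWord i j (2 * M i j))
      = (cs.rightInvSeq (alternatingWord i j (2 * M i j))).take (M i j)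
        ++ (cs.rightInvSeq (alternatingWord i j (2 * M i j))).take (M i j) := by
  set m := M i j with hm
  set L := cs.rightInvSeq (alternatingWord i j (2 * m)) with hL
  have hlen : L.length = 2 * m := by
    rw [hL, cs.length_rightInvSeq, length_alternatingWord]
  have hdt : L.drop m = L.take m := by
    apply List.ext_getElem
    · rw [List.length_drop, List.length_take, hlen]; omega
    · intro k hk1 hk2
      rw [List.length_drop, hlen] at hk1
      have hk : k < m := by omega
      rw [List.getElem_drop, List.getElem_take]
      rw [← List.getD_eq_getElem L 1, ← List.getD_eq_getElem L 1]
      rw [hL, altWord_ris_entry cs i j (2*m) (m+k) (by omega),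
        altWord_ris_entry cs i j (2*m) k (by omega)]
      have e1 : 2 * m - (m + k) - 1 = m - k - 1 := by omega
      have e2 : 2 * m - (m + k) = (m - k - 1) + 1 := by omega
      have e3 : 2 * m - k - 1 = (m - k - 1) + m := by omega
      have e4 : 2 * m - k = (m - k - 1) + m + 1 := by omega
      rw [e1, e2, e3, e4, CL cs i j (m - k - 1)]
  conv_lhs => rw [← List.take_append_drop m L, hdt]

lemma bpar_ris_alt (i j : B) (t : W) :
    bpar t (cs.rightInvSeq (alternatingWord i j (2 * M i j))) = 0 := by
  rw [ris_alt_doubled, bpar_append, zmod2_add_self]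

lemma sigE_liftable : CoxeterMatrix.IsLiftable M (sigE cs) := by
  intro i j
  have hAP : ∀ m : ℕ, (List.map (sigE cs) (alternatingWord i j (2 * m))).prod
      = (sigE cs i * sigE cs j) ^ m := by
    intro m
    induction m with
    | zero => simp [alternatingWord]
    | succ m ih =>
        have hidx : 2 * (m+1) = (2*m + 1) + 1 := by omega
        rw [hidx, alternatingWord_succ', alternatingWord_succ']
        rw [if_neg (by simp [Nat.even_add_one, parity_simps]), if_pos (by simp [parity_simps])]
        rw [List.map_cons, List.map_cons, List.prod_cons, List.prod_cons, ih, pow_succ',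
          mul_assoc]
  have hπ : π (alternatingWord i j (2 * M i j)) = 1 := by
    rw [prod_alternatingWord_eq_mul_pow]
    rw [if_pos (by simp [parity_simps])]
    rw [Nat.mul_div_cancel_left _ (by norm_num : 0 < 2)]
    rw [cs.simple_mul_simple_pow i j, one_mul]
  rw [← hAP (M i j)]
  funext p
  have h := sigE_prod cs (alternatingWord i j (2 * M i j)) p
  have hone : (1 : Function.End (W × ZMod 2)) p = p := rfl
  rw [h, hπ, bpar_ris_alt, hone]
  simp

noncomputable def Phi : W →* Function.End (W × ZMod 2) :=
  cs.lift ⟨sigE cs, sigE_liftable cs⟩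

lemma Phi_wordProd (ω : List B) : Phi cs (π ω) = (List.map (sigE cs) ω).prod := by
  induction ω with
  | nil => simp [Phi]
  | cons i ω ih =>
      rw [cs.wordProd_cons, map_mul, ih, List.map_cons, List.prod_cons]
      congr 1
      exact cs.lift_apply_simple (sigE_liftable cs) i

lemma bpar_invariant {ω ω' : List B} (h : π ω = π ω') (t : W) :
    bpar t (cs.rightInvSeq ω) = bpar t (cs.rightInvSeq ω') := by
  have h1 := sigE_prod cs ω (t, 0)
  have h2 := sigE_prod cs ω' (t, 0)
  rw [← Phi_wordProd, h, Phi_wordProd] at h1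
  have h3 := h1.symm.trans h2
  have h4 := congrArg Prod.snd h3
  simpa [h] using h4

lemma bpar_cons (t a : W) (l : List W) :
    bpar t (a :: l) = (if a = t then 1 else 0) + bpar t l := rfl

lemma conj_eq_iff (g a b : W) : g⁻¹ * a * g = b ↔ a = g * b * g⁻¹ := by
  rw [mul_assoc, inv_mul_eq_iff_eq_mul]
  exact (eq_mul_inv_iff_mul_eq).symm

lemma conj_eq_iff' (g a b : W) : g * a * g⁻¹ = b ↔ a = g⁻¹ * b * g := by
  have := conj_eq_iff g⁻¹ a b
  rwa [inv_inv] at this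

theorem strong_exchange {ω : List B} (hred : cs.IsReduced ω) {t : W}
    (ht : cs.IsReflection t) (hlen : ℓ (π ω * t) < ℓ (π ω)) : t ∈ cs.rightInvSeq ω := by
  have htt : t * t = 1 := ht.mul_self
  have htinv : t⁻¹ = t := ht.inv
  obtain ⟨q, i, hti⟩ := ht
  obtain ⟨γ, hγ⟩ := cs.wordProd_surjective q
  obtain ⟨β, hβr, hβp⟩ := cs.exists_reduced_word' (π ω * t)
  have hπρ : π (γ ++ ([i] ++ γ.reverse)) = t := by
    rw [cs.wordProd_append, cs.wordProd_append, cs.wordProd_singleton, cs.wordProd_reverse,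
      hγ, hti, mul_assoc]
  have hπ0 : π (β ++ (γ ++ ([i] ++ γ.reverse))) = π ω := by
    rw [cs.wordProd_append, hπρ, ← hβp, mul_assoc, htt, mul_one]
  have hinv := bpar_invariant cs hπ0 t
  have hf1 : ∀ x, t⁻¹ * x * t = t ↔ x = t := by
    intro x
    rw [conj_eq_iff, htt, one_mul, htinv]
  have hf2 : ∀ x, (σ i * q⁻¹)⁻¹ * x * (σ i * q⁻¹) = t ↔ x = σ i := by
    intro x
    rw [conj_eq_iff, hti]
    have : σ i * q⁻¹ * (q * σ i * q⁻¹) * (σ i * q⁻¹)⁻¹ = σ i := by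
      rw [mul_inv_rev, cs.inv_simple, inv_inv]
      simp only [mul_assoc, inv_mul_cancel_left]
      rw [← mul_assoc, cs.simple_mul_simple_self, one_mul]
    rw [this]
  have hf3 : ∀ x, q * x * q⁻¹ = t ↔ x = σ i := by
    intro x
    rw [conj_eq_iff', hti]
    have : q⁻¹ * (q * σ i * q⁻¹) * q = σ i := by
      simp only [mul_assoc, inv_mul_cancel_left, inv_mul_cancel, mul_one]
    rw [this]
  have hc1 : bpar t ((cs.rightInvSeq β).map
      (fun x => (π (γ ++ ([i] ++ γ.reverse)))⁻¹ * x * π (γ ++ ([i] ++ γ.reverse)))) = 0 := by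
    simp only [hπρ]
    rw [bpar_map t t _ hf1]
    apply bpar_eq_zero_of_not_mem
    intro hmem
    have hri := cs.isRightInversion_of_mem_rightInvSeq hβr hmem
    have := hri.2
    rw [← hβp, mul_assoc, htt, mul_one] at this
    omega
  have hc2 : bpar t (cs.rightInvSeq (γ ++ ([i] ++ γ.reverse))) = 1 := by
    rw [rightInvSeq_append, bpar_append]
    have hmid : cs.rightInvSeq ([i] ++ γ.reverse)
        = ((π γ.reverse)⁻¹ * σ i * π γ.reverse) :: cs.rightInvSeq γ.reverse := rfl
    rw [hmid, bpar_cons]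
    have hhead : (π γ.reverse)⁻¹ * σ i * π γ.reverse = t := by
      rw [cs.wordProd_reverse, hγ, inv_inv, hti]
    rw [if_pos hhead]
    have hπ2 : π ([i] ++ γ.reverse) = σ i * q⁻¹ := by
      rw [cs.wordProd_append, cs.wordProd_singleton, cs.wordProd_reverse, hγ]
    simp only [hπ2]
    rw [bpar_map t (σ i) _ hf2]
    rw [cs.rightInvSeq_reverse, bpar_reverse, lis_eq_map_conj]
    simp only [hγ]
    rw [bpar_map t (σ i) _ hf3]
    have hz := zmod2_add_self (bpar (σ i) (cs.rightInvSeq γ))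
    have hgoal : bpar (σ i) (cs.rightInvSeq γ) + (1 + bpar (σ i) (cs.rightInvSeq γ))
        = (bpar (σ i) (cs.rightInvSeq γ) + bpar (σ i) (cs.rightInvSeq γ)) + 1 := by ring
    rw [hgoal, hz, zero_add]
  have hfin : bpar t (cs.rightInvSeq ω) = 1 := by
    rw [← hinv, rightInvSeq_append, bpar_append, hc1, hc2, zero_add]
  exact mem_of_bpar_ne_zero (by rw [hfin]; decide)

lemma isReduced_nil : cs.IsReduced ([] : List B) := by
  simp [CoxeterSystem.IsReduced]

lemma exists_reduced_sublist : ∀ (n : ℕ) (ω : List B), ω.length ≤ n →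
    ∃ φ, φ <+ ω ∧ cs.IsReduced φ ∧ π φ = π ω := by
  intro n
  induction n with
  | zero =>
      intro ω hω
      have : ω = [] := List.length_eq_zero_iff.mp (by omega)
      subst this
      exact ⟨[], List.Sublist.refl _, isReduced_nil cs, rfl⟩
  | succ n ih =>
      intro ω hω
      by_cases hred : cs.IsReduced ω
      · exact ⟨ω, List.Sublist.refl ω, hred, rfl⟩
      · have hne : ω ≠ [] := by rintro rfl; exact hred (isReduced_nil cs)
        have hlpos : 0 < ω.length := List.length_pos_iff.mpr hne
        have hex : ∃ k, ¬ cs.IsReduced (ω.take (k+1)) := by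
          refine ⟨ω.length - 1, ?_⟩
          have he : ω.length - 1 + 1 = ω.length := by omega
          rw [he, List.take_length]
          exact hred
        let k := Nat.find hex
        have hk : ¬ cs.IsReduced (ω.take (k+1)) := Nat.find_spec hex
        have hmin : ∀ m, m < k → cs.IsReduced (ω.take (m+1)) := fun m hm => by
          have := Nat.find_min hex hm; simpa using this
        have hkred : cs.IsReduced (ω.take k) := by
          rcases Nat.eq_zero_or_pos k with h0 | hpos
          · rw [h0]; simpa using isReduced_nil cs
          · have he : k - 1 + 1 = k := by omega
            have := hmin (k-1) (by omega)
            rwa [he] at this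
        have hklen : k < ω.length := by
          by_contra hcon
          push_neg at hcon
          have : ω.take k = ω := List.take_of_length_le hcon
          rw [this] at hkred
          exact hred hkred
        have hu : ℓ (π (ω.take k)) = k := by
          have h1 : (ω.take k).length = k := by rw [List.length_take]; omega
          rw [hkred, h1]
        have htake : ω.take (k+1) = ω.take k ++ [ω[k]] := by
          rw [List.take_succ, List.getElem?_eq_getElem hklen]
          rfl
        have hπtake : π (ω.take (k+1)) = π (ω.take k) * σ (ω[k]) := by
          rw [htake, cs.wordProd_append, cs.wordProd_singleton]
        have hlen1 : ℓ (π (ω.take k) * σ (ω[k])) < ℓ (π (ω.take k)) := by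
          have hne2 : ℓ (π (ω.take k) * σ (ω[k])) ≠ k+1 := by
            intro hcon
            apply hk
            show ℓ (π (ω.take (k+1))) = (ω.take (k+1)).length
            rw [hπtake, hcon, List.length_take]
            omega
          rcases cs.length_mul_simple (π (ω.take k)) (ω[k]) with h | h <;> omega
        have hmem : σ (ω[k]) ∈ cs.rightInvSeq (ω.take k) :=
          strong_exchange cs hkred (cs.isReflection_simple (ω[k])) hlen1
        obtain ⟨l, hl, hlv⟩ := List.mem_iff_getElem.mp hmem
        rw [cs.length_rightInvSeq] at hl
        have herase : π (ω.take k) * σ (ω[k]) = π ((ω.take k).eraseIdx l) := by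
          rw [← cs.wordProd_mul_getD_rightInvSeq (ω.take k) l]
          congr 1
          rw [List.getD_eq_getElem _ 1 (by rw [cs.length_rightInvSeq]; exact hl), hlv]
        have hπφ' : π ((ω.take k).eraseIdx l ++ ω.drop (k+1)) = π ω := by
          conv_rhs => rw [← List.take_append_drop (k+1) ω]
          rw [cs.wordProd_append, cs.wordProd_append, ← herase, hπtake]
        have hsub : (ω.take k).eraseIdx l ++ ω.drop (k+1) <+ ω := by
          have h1 : (ω.take k).eraseIdx l <+ ω.take k := List.eraseIdx_sublist _ l
          have h2 : ω.take k <+ ω.take (k+1) := by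
            rw [htake]; exact List.sublist_append_left _ _
          have h3 := List.Sublist.append (h1.trans h2) (List.Sublist.refl (ω.drop (k+1)))
          rwa [List.take_append_drop] at h3
        have hlt : ((ω.take k).eraseIdx l ++ ω.drop (k+1)).length ≤ n := by
          have hl1 : ((ω.take k).eraseIdx l).length + 1 = (ω.take k).length :=
            List.length_eraseIdx_add_one hl
          rw [List.length_append, List.length_drop]
          rw [List.length_take] at hl1
          omega
        obtain ⟨φ, h1, h2, h3⟩ := ih _ hlt
        exact ⟨φ, h1.trans hsub, h2, h3.trans hπφ'⟩

theorem le_subword {u w : W} (h : bruhatLE cs u w) :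
    ∀ ω : List B, cs.IsReduced ω → π ω = w →
      ∃ φ, φ <+ ω ∧ cs.IsReduced φ ∧ π φ = u := by
  induction h with
  | refl => intro ω hred hπ; exact ⟨ω, List.Sublist.refl _, hred, hπ⟩
  | @tail b c hchain hstep ih =>
      intro ω hred hπ
      obtain ⟨t, ht, rfl, hl⟩ := hstep
      have hlen2 : ℓ (π ω * t) < ℓ (π ω) := by
        rw [hπ, mul_assoc, ht.mul_self, mul_one]
        exact hl
      have hmem := strong_exchange cs hred ht hlen2
      obtain ⟨l, hl2, hlv⟩ := List.mem_iff_getElem.mp hmem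
      have herase : b = π (ω.eraseIdx l) := by
        rw [← cs.wordProd_mul_getD_rightInvSeq ω l, List.getD_eq_getElem _ 1 hl2, hlv,
          hπ, mul_assoc, ht.mul_self, mul_one]
      obtain ⟨ψ, hψ1, hψ2, hψ3⟩ :=
        exists_reduced_sublist cs (ω.eraseIdx l).length (ω.eraseIdx l) le_rfl
      obtain ⟨φ, hφ1, hφ2, hφ3⟩ := ih ψ hψ2 (hψ3.trans herase.symm)
      exact ⟨φ, hφ1.trans (hψ1.trans (List.eraseIdx_sublist ω l)), hφ2, hφ3⟩

theorem subword_le_aux : ∀ n : ℕ, ∀ ω : List B, cs.IsReduced ω → ω.length ≤ n →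
    ∀ φ : List B, φ <+ ω → bruhatLE cs (π φ) (π ω) := by
  intro n
  induction n using Nat.strong_induction_on with
  | _ n IH =>
  intro ω hred hlen φ hsub
  cases ω with
  | nil =>
      have : φ = [] := List.sublist_nil.mp hsub
      subst this
      exact Relation.ReflTransGen.refl
  | cons i α =>
      have hα : cs.IsReduced α := by
        have := hred.drop 1
        simpa using this
      have hlenα : α.length + 1 ≤ n := by simpa using hlen
      have hli : ℓ (π (i :: α)) = α.length + 1 := by rw [hred.eq, List.length_cons]
      have hlα : ℓ (π α) = α.length := hα
      have hstep : bruhatLE cs (π α) (π (i :: α)) := by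
        rw [cs.wordProd_cons]
        apply le_simple_mul cs i
        rw [← cs.wordProd_cons]
        omega
      have HB : ∀ (ω' : List B), cs.IsReduced ω' → ω'.length < n →
          ∀ φ' : List B, φ' <+ ω' → bruhatLE cs (π φ') (π ω') :=
        fun ω' h1 h2 φ' h3 => IH ω'.length h2 ω' h1 le_rfl φ' h3
      have M_aux : ∀ (v u : W) (a : B), bruhatLE cs u v → ℓ v < n →
          ℓ (σ a * v) < ℓ v → bruhatLE cs (σ a * u) v := by
        intro v u a huv hvn hdesc
        by_cases hu : ℓ (σ a * u) < ℓ u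
        · have h2 : ℓ (σ a * u) < ℓ (σ a * (σ a * u)) := by
            rw [cs.simple_mul_simple_cancel_left]; exact hu
          have h3 := le_simple_mul cs a h2
          rw [cs.simple_mul_simple_cancel_left] at h3
          exact le_trans' cs h3 huv
        · push_neg at hu
          have hu' : ℓ u < ℓ (σ a * u) :=
            lt_of_le_of_ne hu (Ne.symm (cs.length_simple_mul_ne u a))
          obtain ⟨β, hβ1, hβ2⟩ := cs.exists_reduced_word' (σ a * v)
          have hav : ℓ (σ a * v) + 1 = ℓ v := by
            rcases cs.length_simple_mul v a with h | h <;> omega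
          have e1 : π (a :: β) = v := by
            rw [cs.wordProd_cons, ← hβ2, cs.simple_mul_simple_cancel_left]
          have hβlen : β.length = ℓ (σ a * v) := by
            rw [hβ2]; exact hβ1.symm
          have hred2 : cs.IsReduced (a :: β) := by
            show ℓ (π (a :: β)) = (a :: β).length
            rw [e1, List.length_cons]
            omega
          obtain ⟨φ₀, hs0, hr0, hp0⟩ := le_subword cs huv (a :: β) hred2 e1
          rcases List.sublist_cons_iff.mp hs0 with hcase | ⟨φ₂, rfl, hφ₂⟩
          · have h5 : bruhatLE cs (π (a :: φ₀)) (π (a :: β)) :=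
              HB (a :: β) hred2 (by simp only [List.length_cons]; omega) (a :: φ₀)
                (List.cons_sublist_cons.mpr hcase)
            rw [cs.wordProd_cons, hp0, e1] at h5
            exact h5
          · exfalso
            have hred3 : ℓ (π (a :: φ₂)) = φ₂.length + 1 := by rw [hr0.eq, List.length_cons]
            have h6 : σ a * u = π φ₂ := by
              rw [← hp0, cs.wordProd_cons, cs.simple_mul_simple_cancel_left]
            have h4 : ℓ (σ a * u) ≤ φ₂.length := by
              rw [h6]; exact cs.length_wordProd_le φ₂
            have h5 : ℓ u = φ₂.length + 1 := by rw [← hp0]; exact hred3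
            omega
      have L_aux : ∀ (u' w' : W), bruhatLE cs u' w' → ℓ w' < n →
          ℓ w' < ℓ (σ i * w') → bruhatLE cs (σ i * u') (σ i * w') := by
        intro u' w' hch
        induction hch with
        | refl => intro _ _; exact Relation.ReflTransGen.refl
        | @tail b c hb hstep ih2 =>
            intro hcn hcup
            obtain ⟨t, ht, rfl, hlt⟩ := hstep
            by_cases hsb : ℓ (σ i * b) ≤ ℓ b
            · have hsb' : ℓ (σ i * b) < ℓ b :=
                lt_of_le_of_ne hsb (cs.length_simple_mul_ne b i)
              have h1 : bruhatLE cs (σ i * u') b := M_aux b u' i hb (by omega) hsb'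
              have h2 : bruhatLE cs b (b * t) := le_mul_reflection cs ht hlt
              have h3 : bruhatLE cs (b * t) (σ i * (b * t)) := le_simple_mul cs i hcup
              exact le_trans' cs h1 (le_trans' cs h2 h3)
            · push_neg at hsb
              have h1 := ih2 (by omega) hsb
              have h2 : bruhatLE cs (σ i * b) (σ i * (b * t)) := by
                have e : σ i * (b * t) = (σ i * b) * t := by rw [mul_assoc]
                rw [e]
                apply le_mul_reflection cs ht
                have c1 : ℓ (σ i * b) ≤ ℓ b + 1 := by
                  rcases cs.length_simple_mul b i with h | h <;> omega
                have c2 : ℓ (σ i * (b * t)) = ℓ (b * t) + 1 := by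
                  rcases cs.length_simple_mul (b * t) i with h | h <;> omega
                rw [← e]
                omega
              exact le_trans' cs h1 h2
      rcases List.sublist_cons_iff.mp hsub with hcase | ⟨φ', rfl, hφ'⟩
      · exact le_trans' cs (HB α hα (by omega) φ hcase) hstep
      · have h1 : bruhatLE cs (π φ') (π α) := HB α hα (by omega) φ' hφ'
        have h2 : bruhatLE cs (σ i * π φ') (σ i * π α) := by
          apply L_aux (π φ') (π α) h1 (by omega)
          rw [← cs.wordProd_cons]
          omega
        rw [cs.wordProd_cons, cs.wordProd_cons]
        exact h2

theorem subword_le {ω φ : List B} (hred : cs.IsReduced ω) (hsub : φ <+ ω) :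
    bruhatLE cs (π φ) (π ω) :=
  subword_le_aux cs ω.length ω hred le_rfl φ hsub




/-- The set of simple reflections (as group elements) Bruhat-below `w`. -/
def VS (w : W) : Set W := {t | (∃ i : B, t = cs.simple i) ∧ bruhatLE cs t w}

lemma VS_mono {u w : W} (h : bruhatLE cs u w) : VS cs u ⊆ VS cs w :=
  fun t ht => ⟨ht.1, le_trans' cs ht.2 h⟩

lemma simple_le_of_mem {ω : List B} (hred : cs.IsReduced ω) {j : B} (hj : j ∈ ω) :
    bruhatLE cs (σ j) (π ω) := by
  have := subword_le cs hred (List.singleton_sublist.mpr hj)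
  simpa using this

lemma mem_VS_letters {ω : List B} (hred : cs.IsReduced ω) {j : B} (hj : j ∈ ω) :
    σ j ∈ VS cs (π ω) := ⟨⟨j, rfl⟩, simple_le_of_mem cs hred hj⟩

lemma VS_subset_letters {ω : List B} (hred : cs.IsReduced ω) :
    ∀ t ∈ VS cs (π ω), ∃ j ∈ ω, t = σ j := by
  rintro t ⟨⟨a, rfl⟩, hle⟩
  obtain ⟨φ, hsub, hφred, hφπ⟩ := le_subword cs hle ω hred rfl
  have hlen : φ.length = 1 := by
    have h1 : ℓ (π φ) = φ.length := hφred
    rw [hφπ, cs.length_simple] at h1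
    omega
  obtain ⟨b, rfl⟩ := List.length_eq_one_iff.mp hlen
  refine ⟨b, List.singleton_sublist.mp hsub, ?_⟩
  rw [← hφπ]
  simp

lemma eq_one_of_VS_empty {w : W} (h : ∀ t, t ∉ VS cs w) : w = 1 := by
  obtain ⟨ω, hred, hπ⟩ := cs.exists_reduced_word' w
  cases ω with
  | nil => rw [hπ]; simp
  | cons a α =>
      exfalso
      apply h (σ a)
      rw [hπ]
      exact mem_VS_letters cs hred (List.mem_cons_self (a := a) (l := α))

lemma VS_mul_subset (u v : W) : VS cs (u * v) ⊆ VS cs u ∪ VS cs v := by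
  obtain ⟨α, hαr, hαπ⟩ := cs.exists_reduced_word' u
  obtain ⟨β, hβr, hβπ⟩ := cs.exists_reduced_word' v
  obtain ⟨φ, hsub, hφr, hφπ⟩ :=
    exists_reduced_sublist cs (α ++ β).length (α ++ β) le_rfl
  have hπφ : π φ = u * v := by rw [hφπ, cs.wordProd_append, ← hαπ, ← hβπ]
  intro t ht
  rw [← hπφ] at ht
  obtain ⟨j, hj, rfl⟩ := VS_subset_letters cs hφr t ht
  rcases List.mem_append.mp (hsub.subset hj) with h | h
  · exact Or.inl (by rw [hαπ]; exact mem_VS_letters cs hαr h)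
  · exact Or.inr (by rw [hβπ]; exact mem_VS_letters cs hβr h)

lemma VS_inv_subset (w : W) : VS cs w⁻¹ ⊆ VS cs w := by
  obtain ⟨ω, hred, hπ⟩ := cs.exists_reduced_word' w
  have hrev : π ω.reverse = w⁻¹ := by rw [cs.wordProd_reverse, hπ]
  have hredrev : cs.IsReduced ω.reverse := (cs.isReduced_reverse_iff ω).mpr hred
  intro t ht
  rw [← hrev] at ht
  obtain ⟨j, hj, rfl⟩ := VS_subset_letters cs hredrev t ht
  rw [hπ]
  exact mem_VS_letters cs hred (by simpa using hj)

lemma wordProd_map_congr {f : B → B} (hf : ∀ b, σ (f b) = σ b) (ω : List B) :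
    π (ω.map f) = π ω := by
  induction ω with
  | nil => simp
  | cons a ω ih => rw [List.map_cons, cs.wordProd_cons, cs.wordProd_cons, hf, ih]

lemma disjoint_VS_of_disjoint_supp {w' w'' : W}
    (hd : Disjoint (supp cs w') (supp cs w'')) : Disjoint (VS cs w') (VS cs w'') := by
  rw [Set.disjoint_left]
  rintro t ⟨⟨a, rfl⟩, hle'⟩ ⟨_, hle''⟩
  obtain ⟨ω', hr', hπ'⟩ := cs.exists_reduced_word' w'
  obtain ⟨ω'', hr'', hπ''⟩ := cs.exists_reduced_word' w''
  obtain ⟨j, hj, hje⟩ := VS_subset_letters cs hr' (σ a)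
    ⟨⟨a, rfl⟩, by rw [← hπ']; exact hle'⟩
  obtain ⟨k, hk, hke⟩ := VS_subset_letters cs hr'' (σ a)
    ⟨⟨a, rfl⟩, by rw [← hπ'']; exact hle''⟩
  have hksupp : k ∈ supp cs w'' := ⟨ω'', hr'', hπ'', hk⟩
  have hsk : σ k = σ j := by rw [← hje, ← hke]
  have hkw' : k ∈ supp cs w' := by
    have hf : ∀ b, σ ((fun b => if b = j then k else b) b) = σ b := by
      intro b
      by_cases hb : b = j
      · simp [hb, hsk]
      · simp [hb]
    have hπm : π (ω'.map (fun b => if b = j then k else b)) = w' := by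
      rw [wordProd_map_congr cs hf, ← hπ']
    have hrm : cs.IsReduced (ω'.map (fun b => if b = j then k else b)) := by
      show ℓ (π _) = _
      rw [hπm, List.length_map, hπ']
      exact hr'
    exact ⟨ω'.map (fun b => if b = j then k else b), hrm, hπm.symm,
      List.mem_map.mpr ⟨j, hj, by simp⟩⟩
  exact Set.disjoint_left.mp hd hkw' hksupp

lemma length_add_of_disjoint : ∀ (n : ℕ) (x y : W), ℓ y ≤ n →
    Disjoint (VS cs x) (VS cs y) → ℓ (x * y) = ℓ x + ℓ y := by
  intro n
  induction n with
  | zero =>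
      intro x y hy hd
      have h1 : y = 1 := cs.length_eq_zero_iff.mp (by omega)
      subst h1
      simp
  | succ n ih =>
      intro x y hy hd
      by_cases hy1 : y = 1
      · subst hy1; simp
      · obtain ⟨j, hdesc⟩ := cs.exists_rightDescent_of_ne_one hy1
        have hdesc' : ℓ (y * σ j) < ℓ y := hdesc
        have hylen : ℓ (y * σ j) + 1 = ℓ y := by
          rcases cs.length_mul_simple y j with h | h <;> omega
        have hyy : (y * σ j) * σ j = y := by rw [cs.simple_mul_simple_cancel_right]
        have hy₁le : bruhatLE cs (y * σ j) y := by
          conv_rhs => rw [← hyy]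
          exact le_mul_reflection cs (cs.isReflection_simple j) (by rw [hyy]; omega)
        have hVy₁ : VS cs (y * σ j) ⊆ VS cs y := VS_mono cs hy₁le
        obtain ⟨β, hβr, hβπ⟩ := cs.exists_reduced_word' (y * σ j)
        have hβlen : β.length = ℓ (y * σ j) := by
          have h0 : ℓ (π β) = β.length := hβr
          rw [← hβπ] at h0
          omega
        have hπβj : π (β ++ [j]) = y := by
          rw [cs.wordProd_append, cs.wordProd_singleton, ← hβπ, hyy]
        have hdisj₁ : Disjoint (VS cs x) (VS cs (y * σ j)) := hd.mono_right hVy₁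
        have ihx : ℓ (x * (y * σ j)) = ℓ x + ℓ (y * σ j) := ih x (y * σ j) (by omega) hdisj₁
        have hkey : ℓ (x * (y * σ j) * σ j) = ℓ (x * (y * σ j)) + 1 := by
          rcases cs.length_mul_simple (x * (y * σ j)) j with h | h
          · exact h
          · exfalso
            obtain ⟨α, hαr, hαπ⟩ := cs.exists_reduced_word' x
            have hαlen : α.length = ℓ x := by
              have h0 : ℓ (π α) = α.length := hαr
              rw [← hαπ] at h0
              omega
            have hπαβ : π (α ++ β) = x * (y * σ j) := by
              rw [cs.wordProd_append, ← hαπ, ← hβπ]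
            have hαβr : cs.IsReduced (α ++ β) := by
              show ℓ (π (α ++ β)) = _
              rw [hπαβ, ihx, List.length_append]
              omega
            have hmem : σ j ∈ cs.rightInvSeq (α ++ β) :=
              strong_exchange cs hαβr (cs.isReflection_simple j) (by rw [hπαβ]; omega)
            rw [rightInvSeq_append] at hmem
            rcases List.mem_append.mp hmem with hmem1 | hmem2
            · obtain ⟨r, hr, hre⟩ := List.mem_map.mp hmem1
              have hri := cs.isRightInversion_of_mem_rightInvSeq hαr hr
              have hxr_lt : ℓ (x * r) < ℓ x := by
                have h2 := hri.2
                rw [← hαπ] at h2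
                exact h2
              have hxr_le : bruhatLE cs (x * r) x := by
                have he : (x * r) * r = x := by rw [mul_assoc, hri.1.mul_self, mul_one]
                conv_rhs => rw [← he]
                exact le_mul_reflection cs hri.1 (by rw [he]; exact hxr_lt)
              have hVr_x : VS cs r ⊆ VS cs x := by
                intro t ht2
                have h3 : r = x⁻¹ * (x * r) := by group
                rw [h3] at ht2
                rcases VS_mul_subset cs x⁻¹ (x * r) ht2 with h | h
                · exact VS_inv_subset cs x h
                · exact (VS_mono cs hxr_le) h
              have hVr_y : VS cs r ⊆ VS cs y := by
                have hre2 : r = π β * σ j * (π β)⁻¹ := by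
                  rw [← conj_eq_iff]
                  exact hre
                have hr_eq : r = y * (y * σ j)⁻¹ := by
                  rw [hre2, ← hβπ, hyy]
                intro t ht2
                rw [hr_eq] at ht2
                rcases VS_mul_subset cs y (y * σ j)⁻¹ ht2 with h | h
                · exact h
                · exact hVy₁ (VS_inv_subset cs (y * σ j) h)
              have hr1 : r = 1 := by
                apply eq_one_of_VS_empty cs
                intro t ht2
                exact Set.disjoint_left.mp hd (hVr_x ht2) (hVr_y ht2)
              rw [hr1] at hre
              have hσ1 : σ j = 1 := by rw [← hre]; group
              have hℓ : ℓ (σ j) = 1 := cs.length_simple j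
              rw [hσ1, cs.length_one] at hℓ
              omega
            · have hri := cs.isRightInversion_of_mem_rightInvSeq hβr hmem2
              have h2 := hri.2
              rw [← hβπ, hyy] at h2
              omega
        have hxy : x * y = x * (y * σ j) * σ j := by
          rw [mul_assoc, hyy]
        rw [hxy, hkey, ihx]
        omega

end BruhatAux

open BruhatAux in
/-- If `w = w' * w''` is a disjoint support decomposition, then multiplication gives a poset
isomorphism `[e,w'] × [e,w''] ≃ [e,w]` of Bruhat intervals. -/
theorem stmt2 (cs : CoxeterSystem M W) (w w' w'' : W)
    (hw : w = w' * w'') (hd : Disjoint (supp cs w') (supp cs w'')) :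
    Set.BijOn (fun p : W × W => p.1 * p.2)
      ({x | bruhatLE cs x w'} ×ˢ {y | bruhatLE cs y w''})
      {z | bruhatLE cs z w} ∧
    ∀ x₁ x₂ y₁ y₂ : W, bruhatLE cs x₁ w' → bruhatLE cs x₂ w' →
      bruhatLE cs y₁ w'' → bruhatLE cs y₂ w'' →
      (bruhatLE cs (x₁ * y₁) (x₂ * y₂) ↔ bruhatLE cs x₁ x₂ ∧ bruhatLE cs y₁ y₂) := by
  have hVd := disjoint_VS_of_disjoint_supp cs hd
  -- a reduced word for a product of elements below w' and w''
  have hpair : ∀ x₂ y₂ : W, bruhatLE cs x₂ w' → bruhatLE cs y₂ w'' →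
      ∃ α₂ β₂ : List B, cs.IsReduced α₂ ∧ cs.IsReduced β₂ ∧ x₂ = cs.wordProd α₂ ∧
        y₂ = cs.wordProd β₂ ∧ cs.IsReduced (α₂ ++ β₂) := by
    intro x₂ y₂ hx₂ hy₂
    obtain ⟨α₂, hα₂r, hα₂π⟩ := cs.exists_reduced_word' x₂
    obtain ⟨β₂, hβ₂r, hβ₂π⟩ := cs.exists_reduced_word' y₂
    have hdisj : Disjoint (VS cs x₂) (VS cs y₂) :=
      Set.disjoint_of_subset (VS_mono cs hx₂) (VS_mono cs hy₂) hVd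
    have e1 : cs.length x₂ = α₂.length := by
      have h0 : cs.length (cs.wordProd α₂) = α₂.length := hα₂r
      rw [← hα₂π] at h0; exact h0
    have e2 : cs.length y₂ = β₂.length := by
      have h0 : cs.length (cs.wordProd β₂) = β₂.length := hβ₂r
      rw [← hβ₂π] at h0; exact h0
    refine ⟨α₂, β₂, hα₂r, hβ₂r, hα₂π, hβ₂π, ?_⟩
    show cs.length (cs.wordProd (α₂ ++ β₂)) = _
    rw [cs.wordProd_append, ← hα₂π, ← hβ₂π,
      length_add_of_disjoint cs (cs.length y₂) x₂ y₂ le_rfl hdisj, List.length_append]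
    omega
  have key0 : ∀ x₂ y₂ : W, bruhatLE cs x₂ w' → bruhatLE cs y₂ w'' →
      ∀ x₁ y₁ : W, bruhatLE cs x₁ x₂ → bruhatLE cs y₁ y₂ →
        bruhatLE cs (x₁ * y₁) (x₂ * y₂) := by
    intro x₂ y₂ hx₂ hy₂ x₁ y₁ h1 h2
    obtain ⟨α₂, β₂, hα₂r, hβ₂r, hα₂π, hβ₂π, hconcat⟩ := hpair x₂ y₂ hx₂ hy₂
    obtain ⟨φ₁, hs1, _, hp1⟩ := le_subword cs h1 α₂ hα₂r hα₂π.symm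
    obtain ⟨φ₂, hs2, _, hp2⟩ := le_subword cs h2 β₂ hβ₂r hβ₂π.symm
    have h3 := subword_le cs hconcat (List.Sublist.append hs1 hs2)
    rw [cs.wordProd_append, cs.wordProd_append, hp1, hp2, ← hα₂π, ← hβ₂π] at h3
    exact h3
  have key1 : ∀ x₁ y₁ x₂ y₂ : W, bruhatLE cs x₁ w' → bruhatLE cs x₂ w' →
      bruhatLE cs y₁ w'' → bruhatLE cs y₂ w'' → x₁ * y₁ = x₂ * y₂ →
        x₁ = x₂ ∧ y₁ = y₂ := by
    intro x₁ y₁ x₂ y₂ hx₁ hx₂ hy₁ hy₂ heq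
    have hu12 : x₂⁻¹ * x₁ = y₂ * y₁⁻¹ := by
      have h := congrArg (fun z => x₂⁻¹ * z * y₁⁻¹) heq
      simpa [mul_assoc] using h
    have hVu' : VS cs (x₂⁻¹ * x₁) ⊆ VS cs w' := by
      intro t ht
      rcases VS_mul_subset cs x₂⁻¹ x₁ ht with h | h
      · exact VS_mono cs hx₂ (VS_inv_subset cs x₂ h)
      · exact VS_mono cs hx₁ h
    have hVu'' : VS cs (x₂⁻¹ * x₁) ⊆ VS cs w'' := by
      rw [hu12]
      intro t ht
      rcases VS_mul_subset cs y₂ y₁⁻¹ ht with h | h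
      · exact VS_mono cs hy₂ h
      · exact VS_mono cs hy₁ (VS_inv_subset cs y₁ h)
    have hu1 : x₂⁻¹ * x₁ = 1 := by
      apply eq_one_of_VS_empty cs
      intro t ht
      exact Set.disjoint_left.mp hVd (hVu' ht) (hVu'' ht)
    have hx : x₁ = x₂ := (inv_mul_eq_one.mp hu1).symm
    refine ⟨hx, ?_⟩
    have h2 : y₂ * y₁⁻¹ = 1 := by rw [← hu12]; exact hu1
    exact (mul_inv_eq_one.mp h2).symm
  have key2 : ∀ x₂ y₂ : W, bruhatLE cs x₂ w' → bruhatLE cs y₂ w'' →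
      ∀ z : W, bruhatLE cs z (x₂ * y₂) →
        ∃ x y : W, z = x * y ∧ bruhatLE cs x x₂ ∧ bruhatLE cs y y₂ := by
    intro x₂ y₂ hx₂ hy₂ z hz
    obtain ⟨α₂, β₂, hα₂r, hβ₂r, hα₂π, hβ₂π, hconcat⟩ := hpair x₂ y₂ hx₂ hy₂
    obtain ⟨φ, hsub, hφr, hφπ⟩ := le_subword cs hz (α₂ ++ β₂) hconcat
      (by rw [cs.wordProd_append, ← hα₂π, ← hβ₂π])
    obtain ⟨φ₁, φ₂, rfl, hs1, hs2⟩ := List.sublist_append_iff.mp hsub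
    refine ⟨cs.wordProd φ₁, cs.wordProd φ₂, ?_, ?_, ?_⟩
    · rw [← hφπ, cs.wordProd_append]
    · have h := subword_le cs hα₂r hs1
      rwa [← hα₂π] at h
    · have h := subword_le cs hβ₂r hs2
      rwa [← hβ₂π] at h
  constructor
  · refine ⟨?_, ?_, ?_⟩
    · rintro ⟨x, y⟩ hp
      rw [Set.mem_prod] at hp
      have h := key0 w' w'' Relation.ReflTransGen.refl Relation.ReflTransGen.refl
        x y hp.1 hp.2
      show bruhatLE cs (x * y) w
      rw [hw]
      exact h
    · rintro ⟨x₁, y₁⟩ hp ⟨x₂, y₂⟩ hq heq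
      rw [Set.mem_prod] at hp hq
      have heq' : x₁ * y₁ = x₂ * y₂ := heq
      obtain ⟨h1, h2⟩ := key1 x₁ y₁ x₂ y₂ hp.1 hq.1 hp.2 hq.2 heq'
      simp [Prod.ext_iff, h1, h2]
    · intro z hz
      have hz' : bruhatLE cs z (w' * w'') := by
        have h := hz
        rw [Set.mem_setOf_eq, hw] at h
        exact h
      obtain ⟨x, y, hzxy, hx, hy⟩ := key2 w' w''
        Relation.ReflTransGen.refl Relation.ReflTransGen.refl z hz'
      exact ⟨(x, y), Set.mem_prod.mpr ⟨hx, hy⟩, hzxy.symm⟩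
  · intro x₁ x₂ y₁ y₂ hx₁ hx₂ hy₁ hy₂
    constructor
    · intro hle
      obtain ⟨x, y, hxy, hx, hy⟩ := key2 x₂ y₂ hx₂ hy₂ (x₁ * y₁) hle
      obtain ⟨e1, e2⟩ := key1 x₁ y₁ x y hx₁ (le_trans' cs hx hx₂) hy₁
        (le_trans' cs hy hy₂) hxy
      constructor
      · rw [e1]; exact hx
      · rw [e2]; exact hy
    · rintro ⟨h1, h2⟩
      exact key0 x₂ y₂ hx₂ hy₂ x₁ y₁ h1 h2
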